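/- arXiv:1204.3215 — 3 statements merged into one kernel-verified Lean document; each statement's English description precedes it below -/
import Mathlib

section
/- Let (X, B) be a Steiner quadruple system of order n ≥ 2, let (X', B') be a disjoint copy of it, and let R_1, ..., R_{n−1} and R'_1, ..., R'_{n−1} be tournament schedules (1-factorizations) on X and X' respectively. Let Y = X ∪ X' and let C consist of all blocks of B, all blocks of B', and all 4-sets {x, y, z', w'} with x, y ∈ X, z', w' ∈ X' such that for some i ∈ {1, ..., n−1} the pair {x, y} belongs to R_i and the pair {z', w'} belongs to R'_i. Then (Y, C) is a Steiner quadruple system of order 2n. -/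
/-- `(X, B)` is a Steiner quadruple system of order `v`: `X` has `v` points, every block in
`B` is a 4-element subset of `X`, and every 3-element subset of `X` is contained in exactly
one block of `B`. -/
def IsSQS {α : Type*} [DecidableEq α] (X : Finset α) (B : Finset (Finset α)) (v : ℕ) : Prop :=
  X.card = v ∧
  (∀ b ∈ B, b ⊆ X ∧ b.card = 4) ∧
  (∀ t : Finset α, t ⊆ X → t.card = 3 → ∃! b, b ∈ B ∧ t ⊆ b)

/-- The last `s` points of `l₁` equal, in order, the first `s` points of `l₂`. -/
def Overlaps {α : Type*} (s : ℕ) (l₁ l₂ : List α) : Prop :=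
  s ≤ l₁.length ∧ s ≤ l₂.length ∧ l₁.drop (l₁.length - s) = l₂.take s

/-- `Ls` is an `s`-overlap cycle for the block set `B`: a nonempty cyclic listing of
duplicate-free orderings, one for each block of `B` (each block appearing exactly once),
in which the last `s` points of each listing equal, in order, the first `s` points of the
next listing (cyclically, i.e. including the wrap-around from the last listing to the
first one). -/
def IsOCycle {α : Type*} [DecidableEq α] (s : ℕ) (B : Finset (Finset α))
    (Ls : List (List α)) : Prop :=
  Ls ≠ [] ∧
  (∀ l ∈ Ls, l.Nodup) ∧
  (Ls.map List.toFinset).Perm B.toList ∧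
  List.Chain' (Overlaps s) (Ls ++ Ls.take 1)

/-- `R` is a tournament schedule (1-factorization) on the `n`-element set `X`: the
2-element subsets of `X` are partitioned into `n - 1` rounds, each round being a perfect
matching of `X` (pairwise disjoint 2-element subsets covering `X`). -/
def IsTournamentSchedule {α : Type*} [DecidableEq α] (X : Finset α) (n : ℕ)
    (R : Fin (n - 1) → Finset (Finset α)) : Prop :=
  (∀ i, ∀ p ∈ R i, p ⊆ X ∧ p.card = 2) ∧
  (∀ i, ∀ p ∈ R i, ∀ q ∈ R i, p ≠ q → Disjoint p q) ∧
  (∀ i, ∀ x ∈ X, ∃ p ∈ R i, x ∈ p) ∧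
  (∀ p : Finset α, p ⊆ X → p.card = 2 → ∃! i, p ∈ R i)

/-- Tournament doubling construction: given disjoint Steiner quadruple systems `(X, B)`
and `(X', B')` of order `n ≥ 2` with tournament schedules `R` and `R'` on `X` and `X'`,
the block set consisting of `B`, `B'`, and all unions `p ∪ q` of a pair `p` of round
`R i` with a pair `q` of round `R' i` is a Steiner quadruple system of order `2n` on
`X ∪ X'`. -/
theorem sqs_tournament_doubling {α : Type*} [DecidableEq α] (n : ℕ) (hn : 2 ≤ n)
    (X X' : Finset α) (hdisj : Disjoint X X')
    (B B' : Finset (Finset α)) (hB : IsSQS X B n) (hB' : IsSQS X' B' n)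
    (R : Fin (n - 1) → Finset (Finset α)) (R' : Fin (n - 1) → Finset (Finset α))
    (hR : IsTournamentSchedule X n R) (hR' : IsTournamentSchedule X' n R')
    (C : Finset (Finset α))
    (hC : ∀ c : Finset α, c ∈ C ↔
      c ∈ B ∨ c ∈ B' ∨ ∃ i, ∃ p ∈ R i, ∃ q ∈ R' i, c = p ∪ q) :
    IsSQS (X ∪ X') C (2 * n) := by
  obtain ⟨hX, hBsub, hBuniq⟩ := hB
  obtain ⟨hX', hBsub', hBuniq'⟩ := hB'
  obtain ⟨hR1, hR2, hR3, hR4⟩ := hR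
  obtain ⟨hR1', hR2', hR3', hR4'⟩ := hR'
  refine ⟨?_, ?_, ?_⟩
  · rw [Finset.card_union_of_disjoint hdisj, hX, hX']; ring
  · intro c hc
    rcases (hC c).1 hc with h | h | ⟨i, p, hp, q, hq, rfl⟩
    · exact ⟨(hBsub c h).1.trans Finset.subset_union_left, (hBsub c h).2⟩
    · exact ⟨(hBsub' c h).1.trans Finset.subset_union_right, (hBsub' c h).2⟩
    · have hpX := (hR1 i p hp).1
      have hqX := (hR1' i q hq).1
      refine ⟨Finset.union_subset_union hpX hqX, ?_⟩
      rw [Finset.card_union_of_disjoint (hdisj.mono hpX hqX), (hR1 i p hp).2,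
        (hR1' i q hq).2]
  · intro t ht hcard
    have hsplit : t ∩ X ∪ t ∩ X' = t := by
      rw [← Finset.inter_union_distrib_left]
      exact Finset.inter_eq_left.mpr ht
    have hdisj2 : Disjoint (t ∩ X) (t ∩ X') :=
      hdisj.mono Finset.inter_subset_right Finset.inter_subset_right
    have hcards : (t ∩ X).card + (t ∩ X').card = 3 := by
      rw [← Finset.card_union_of_disjoint hdisj2, hsplit, hcard]
    have h03 : (t ∩ X).card = 0 ∨ (t ∩ X).card = 1 ∨ (t ∩ X).card = 2 ∨
        (t ∩ X).card = 3 := by omega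
    rcases h03 with h0 | h1 | h2 | h3
    · -- t ⊆ X'
      have htX : t ⊆ X' := by
        have he : t ∩ X' = t :=
          Finset.eq_of_subset_of_card_le Finset.inter_subset_left (by omega)
        rw [← he]; exact Finset.inter_subset_right
      obtain ⟨b, ⟨hbB, htb⟩, hbu⟩ := hBuniq' t htX hcard
      refine ⟨b, ⟨(hC b).2 (Or.inr (Or.inl hbB)), htb⟩, ?_⟩
      rintro c ⟨hcC, htc⟩
      rcases (hC c).1 hcC with h | h | ⟨i, p, hp, q, hq, rfl⟩
      · exfalso
        obtain ⟨x, hx⟩ := Finset.card_pos.mp (show 0 < t.card by omega)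
        exact Finset.disjoint_right.mp hdisj (htX hx) ((hBsub c h).1 (htc hx))
      · exact hbu c ⟨h, htc⟩
      · exfalso
        have hts : t ⊆ q := by
          intro x hx
          rcases Finset.mem_union.mp (htc hx) with h1 | h1
          · exact absurd ((hR1 i p hp).1 h1)
              (Finset.disjoint_right.mp hdisj (htX hx))
          · exact h1
        have := Finset.card_le_card hts
        rw [hcard, (hR1' i q hq).2] at this; omega
    · -- one point in X, two in X'
      have h2' : (t ∩ X').card = 2 := by omega
      obtain ⟨i, hqR, hiu⟩ := hR4' (t ∩ X') Finset.inter_subset_right h2'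
      obtain ⟨z, hz⟩ := Finset.card_eq_one.mp h1
      have hzmem : z ∈ t ∩ X := hz ▸ Finset.mem_singleton_self z
      have hzt : z ∈ t := (Finset.mem_inter.mp hzmem).1
      have hzX : z ∈ X := (Finset.mem_inter.mp hzmem).2
      obtain ⟨p, hpR, hzp⟩ := hR3 i z hzX
      refine ⟨p ∪ t ∩ X', ⟨(hC _).2 (Or.inr (Or.inr ⟨i, p, hpR, t ∩ X', hqR, rfl⟩)),
        ?_⟩, ?_⟩
      · intro x hx
        rw [← hsplit] at hx
        rcases Finset.mem_union.mp hx with h1 | h1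
        · rw [hz] at h1
          exact Finset.mem_union_left _ (Finset.mem_singleton.mp h1 ▸ hzp)
        · exact Finset.mem_union_right _ h1
      · rintro c ⟨hcC, htc⟩
        rcases (hC c).1 hcC with h | h | ⟨j, p', hp', q', hq', rfl⟩
        · exfalso
          obtain ⟨w, hw⟩ := Finset.card_pos.mp (show 0 < (t ∩ X').card by omega)
          obtain ⟨hwt, hwX'⟩ := Finset.mem_inter.mp hw
          exact Finset.disjoint_right.mp hdisj hwX' ((hBsub c h).1 (htc hwt))
        · exact absurd ((hBsub' c h).1 (htc hzt)) (Finset.disjoint_left.mp hdisj hzX)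
        · have hq'eq : q' = t ∩ X' := by
            have hsub : t ∩ X' ⊆ q' := by
              intro x hx
              obtain ⟨hxt, hxX'⟩ := Finset.mem_inter.mp hx
              rcases Finset.mem_union.mp (htc hxt) with h1 | h1
              · exact absurd ((hR1 j p' hp').1 h1)
                  (Finset.disjoint_right.mp hdisj hxX')
              · exact h1
            exact (Finset.eq_of_subset_of_card_le hsub
              (by rw [(hR1' j q' hq').2, h2'])).symm
          have hji : j = i := hiu j (hq'eq ▸ hq')
          subst hji
          have hzp' : z ∈ p' := by
            rcases Finset.mem_union.mp (htc hzt) with h1 | h1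
            · exact h1
            · exact absurd ((hR1' j q' hq').1 h1) (Finset.disjoint_left.mp hdisj hzX)
          have hpp : p' = p := by
            by_contra hne
            exact Finset.disjoint_left.mp (hR2 j p' hp' p hpR hne) hzp' hzp
          rw [hq'eq, hpp]
    · -- two points in X, one in X'
      have h1' : (t ∩ X').card = 1 := by omega
      obtain ⟨i, hpR, hiu⟩ := hR4 (t ∩ X) Finset.inter_subset_right h2
      obtain ⟨z, hz⟩ := Finset.card_eq_one.mp h1'
      have hzmem : z ∈ t ∩ X' := hz ▸ Finset.mem_singleton_self z
      have hzt : z ∈ t := (Finset.mem_inter.mp hzmem).1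
      have hzX' : z ∈ X' := (Finset.mem_inter.mp hzmem).2
      obtain ⟨q, hqR, hzq⟩ := hR3' i z hzX'
      refine ⟨t ∩ X ∪ q, ⟨(hC _).2 (Or.inr (Or.inr ⟨i, t ∩ X, hpR, q, hqR, rfl⟩)),
        ?_⟩, ?_⟩
      · intro x hx
        rw [← hsplit] at hx
        rcases Finset.mem_union.mp hx with h1 | h1
        · exact Finset.mem_union_left _ h1
        · rw [hz] at h1
          exact Finset.mem_union_right _ (Finset.mem_singleton.mp h1 ▸ hzq)
      · rintro c ⟨hcC, htc⟩
        rcases (hC c).1 hcC with h | h | ⟨j, p', hp', q', hq', rfl⟩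
        · exact absurd ((hBsub c h).1 (htc hzt)) (Finset.disjoint_right.mp hdisj hzX')
        · exfalso
          obtain ⟨w, hw⟩ := Finset.card_pos.mp (show 0 < (t ∩ X).card by omega)
          obtain ⟨hwt, hwX⟩ := Finset.mem_inter.mp hw
          exact Finset.disjoint_left.mp hdisj hwX ((hBsub' c h).1 (htc hwt))
        · have hp'eq : p' = t ∩ X := by
            have hsub : t ∩ X ⊆ p' := by
              intro x hx
              obtain ⟨hxt, hxX⟩ := Finset.mem_inter.mp hx
              rcases Finset.mem_union.mp (htc hxt) with h1 | h1
              · exact h1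
              · exact absurd ((hR1' j q' hq').1 h1)
                  (Finset.disjoint_left.mp hdisj hxX)
            exact (Finset.eq_of_subset_of_card_le hsub
              (by rw [(hR1 j p' hp').2, h2])).symm
          have hji : j = i := hiu j (hp'eq ▸ hp')
          subst hji
          have hzq' : z ∈ q' := by
            rcases Finset.mem_union.mp (htc hzt) with h1 | h1
            · exact absurd ((hR1 j p' hp').1 h1)
                (Finset.disjoint_right.mp hdisj hzX')
            · exact h1
          have hqq : q' = q := by
            by_contra hne
            exact Finset.disjoint_left.mp (hR2' j q' hq' q hqR hne) hzq' hzq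
          rw [hp'eq, hqq]
    · -- t ⊆ X
      have htX : t ⊆ X := by
        have he : t ∩ X = t :=
          Finset.eq_of_subset_of_card_le Finset.inter_subset_left (by omega)
        rw [← he]; exact Finset.inter_subset_right
      obtain ⟨b, ⟨hbB, htb⟩, hbu⟩ := hBuniq t htX hcard
      refine ⟨b, ⟨(hC b).2 (Or.inl hbB), htb⟩, ?_⟩
      rintro c ⟨hcC, htc⟩
      rcases (hC c).1 hcC with h | h | ⟨i, p, hp, q, hq, rfl⟩
      · exact hbu c ⟨h, htc⟩
      · exfalso
        obtain ⟨x, hx⟩ := Finset.card_pos.mp (show 0 < t.card by omega)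
        exact Finset.disjoint_left.mp hdisj (htX hx) ((hBsub' c h).1 (htc hx))
      · exfalso
        have hts : t ⊆ p := by
          intro x hx
          rcases Finset.mem_union.mp (htc hx) with h1 | h1
          · exact h1
          · exact absurd ((hR1' i q hq).1 h1)
              (Finset.disjoint_left.mp hdisj (htX hx))
        have := Finset.card_le_card hts
        rw [hcard, (hR1 i p hp).2] at this; omega
end

section
/- There exists a Steiner quadruple system of order 10 that admits a 1-overlap cycle. -/
instance {α : Type*} [DecidableEq α] (s : ℕ) (l₁ l₂ : List α) :
    Decidable (Overlaps s l₁ l₂) :=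
  inferInstanceAs (Decidable (s ≤ l₁.length ∧ s ≤ l₂.length ∧
    l₁.drop (l₁.length - s) = l₂.take s))

/-- The listings of a 1-overlap cycle for a Steiner quadruple system of order 10. -/
def myLs : List (List ℕ) :=
  [[0, 1, 2, 3], [3, 0, 7, 5], [5, 7, 9, 4], [4, 0, 7, 8], [8, 1, 5, 7], [7, 3, 4, 6],
   [6, 0, 3, 8], [8, 3, 4, 1], [1, 2, 6, 8], [8, 0, 1, 9], [9, 2, 4, 8], [8, 0, 5, 2],
   [2, 7, 9, 0], [0, 1, 4, 5], [5, 1, 9, 2], [2, 1, 7, 4], [4, 0, 2, 6], [6, 2, 7, 5],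
   [5, 1, 3, 6], [6, 1, 7, 0], [0, 6, 9, 5], [5, 2, 4, 3], [3, 2, 7, 8], [8, 3, 9, 5],
   [5, 6, 8, 4], [4, 1, 6, 9], [9, 7, 8, 6], [6, 2, 9, 3], [3, 1, 7, 9], [9, 3, 4, 0]]

/-- The block set of the Steiner quadruple system. -/
def myB : Finset (Finset ℕ) := (myLs.map List.toFinset).toFinset

set_option maxRecDepth 40000 in
set_option synthInstance.maxSize 2000 in
set_option synthInstance.maxHeartbeats 1000000 in
set_option maxHeartbeats 4000000 in
theorem key : ∀ a < 10, ∀ b < 10, ∀ c < 10, a ≠ b → a ≠ c → b ≠ c →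
      ∃ q ∈ myLs.map List.toFinset, ({a,b,c} : Finset ℕ) ⊆ q ∧
        ∀ q' ∈ myLs.map List.toFinset, ({a,b,c} : Finset ℕ) ⊆ q' → q' = q := by
  decide

theorem nodup_map : (myLs.map List.toFinset).Nodup := by decide

set_option maxRecDepth 4000 in
/-- There exists a Steiner quadruple system of order 10 that admits a 1-overlap cycle. -/
theorem sqs_10_one_ocycle :
    ∃ (X : Finset ℕ) (B : Finset (Finset ℕ)) (Ls : List (List ℕ)),
      IsSQS X B 10 ∧ IsOCycle 1 B Ls := by
  refine ⟨Finset.range 10, myB, myLs, ⟨by decide, by decide, ?_⟩,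
    by decide, by decide, (List.toFinset_toList nodup_map).symm,
    by rw [List.Chain']; decide⟩
  intro t ht hc
  obtain ⟨x, y, z, hxy, hxz, hyz, rfl⟩ := Finset.card_eq_three.mp hc
  have hx : x < 10 := Finset.mem_range.mp (ht (by simp))
  have hy : y < 10 := Finset.mem_range.mp (ht (by simp))
  have hz : z < 10 := Finset.mem_range.mp (ht (by simp))
  obtain ⟨q, hq, hsub, huniq⟩ := key x hx y hy z hz hxy hxz hyz
  exact ⟨q, ⟨List.mem_toFinset.mpr hq, hsub⟩,
    fun q' ⟨hq', hsub'⟩ => huniq q' (List.mem_toFinset.mp hq') hsub'⟩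
end

section
/- For every even natural number n ≥ 2, there exists a tournament schedule on an n-element set: the set of all 2-element subsets of the set can be partitioned into n − 1 rounds, each round being a perfect matching (a set of n/2 pairwise disjoint pairs covering all n points). -/
/-- Round-robin pairing function: in round `i`, point `x` is paired with `schedF m i x`,
where the point set is `{0, ..., m}` (so `n = m + 1` points, `m` odd). The special point
`m` is paired with `i`, and a point `x < m`, `x ≠ i`, is paired with `2i - x (mod m)`. -/
def schedF (m i x : ℕ) : ℕ :=
  if x = m then i else if x = i then m
  else (2 * (i : ZMod m) - (x : ZMod m)).val

section

variable {m : ℕ}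

lemma sched_two_unit (hm : m % 2 = 1) : IsUnit (2 : ZMod m) := by
  have : NeZero m := ⟨by omega⟩
  have hcop : Nat.Coprime 2 m := by
    simpa [Nat.coprime_two_left, Nat.odd_iff] using hm
  have := (ZMod.isUnit_iff_coprime 2 m).mpr hcop
  simpa using this

lemma sched_cast_inj [NeZero m] {x y : ℕ} (hx : x < m) (hy : y < m)
    (h : (x : ZMod m) = y) : x = y := by
  have := congrArg ZMod.val h
  rwa [ZMod.val_cast_of_lt hx, ZMod.val_cast_of_lt hy] at this

lemma schedF_lt (hm : m % 2 = 1) {i x : ℕ} (hi : i < m) (hx : x < m + 1) :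
    schedF m i x < m + 1 := by
  have : NeZero m := ⟨by omega⟩
  unfold schedF
  split
  · omega
  · split
    · omega
    · exact lt_of_lt_of_le (ZMod.val_lt _) (by omega)

lemma schedF_ne (hm : m % 2 = 1) {i x : ℕ} (hi : i < m) (hx : x < m + 1) :
    schedF m i x ≠ x := by
  have : NeZero m := ⟨by omega⟩
  unfold schedF
  split
  · omega
  · split
    · omega
    · rename_i h1 h2
      intro he
      have hxm : x < m := by omega
      have : ((2 * (i : ZMod m) - (x : ZMod m)).val : ZMod m) = (x : ZMod m) := by
        rw [he]
      rw [ZMod.natCast_val, ZMod.cast_id] at this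
      have h2x : 2 * (i : ZMod m) = 2 * (x : ZMod m) := by
        linear_combination this
      have := (sched_two_unit hm).mul_left_cancel h2x
      exact h2 (sched_cast_inj hxm hi this.symm)

lemma schedF_invol (hm : m % 2 = 1) {i x : ℕ} (hi : i < m) (hx : x < m + 1) :
    schedF m i (schedF m i x) = x := by
  have : NeZero m := ⟨by omega⟩
  unfold schedF
  split
  · -- x = m, partner is i; schedF m i i = m
    rename_i h
    rw [if_neg (by omega), if_pos rfl, h]
  · split
    · -- x = i, partner is m
      rename_i h1 h2
      rw [if_pos rfl, h2]
    · -- partner is y = (2i - x).val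
      rename_i h1 h2
      set y := (2 * (i : ZMod m) - (x : ZMod m)).val with hy
      have hym : y < m := ZMod.val_lt _
      have hycast : ((y : ℕ) : ZMod m) = 2 * (i : ZMod m) - (x : ZMod m) := by
        rw [hy, ZMod.natCast_val, ZMod.cast_id]
      have hyne_m : y ≠ m := by omega
      have hyne_i : y ≠ i := by
        intro he
        have : (2 * (i : ZMod m) - (x : ZMod m)) = (i : ZMod m) := by
          rw [← hycast, he]
        have h2x : 2 * (i : ZMod m) = 2 * (x : ZMod m) := by
          have hix : (i : ZMod m) = (x : ZMod m) := by linear_combination this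
          rw [hix]
        have := (sched_two_unit hm).mul_left_cancel h2x
        exact h2 (sched_cast_inj (by omega) hi this.symm)
      rw [if_neg hyne_m, if_neg hyne_i]
      have : 2 * (i : ZMod m) - ((y : ℕ) : ZMod m) = (x : ZMod m) := by
        rw [hycast]; ring
      rw [this, ZMod.val_cast_of_lt (by omega)]

lemma schedF_existsUnique (hm : m % 2 = 1) {a b : ℕ} (ha : a < m + 1) (hb : b < m + 1)
    (hab : a ≠ b) : ∃! i : Fin m, schedF m i.val a = b := by
  have : NeZero m := ⟨by omega⟩
  rcases eq_or_ne a m with heq | ham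
  · -- a = m : partner is i, so i = b
    have hbm : b < m := by omega
    refine ⟨⟨b, hbm⟩, ?_, ?_⟩
    · simp [schedF, heq]
    · intro j hj
      simp only [schedF, if_pos heq] at hj
      exact Fin.ext hj
  · have ham' : a < m := by omega
    rcases eq_or_ne b m with heqb | hbm
    · -- b = m : need i = a
      refine ⟨⟨a, ham'⟩, ?_, ?_⟩
      · simp [schedF, ham, heqb]
      · intro j hj
        simp only [schedF, if_neg ham] at hj
        by_cases h : a = j.val
        · exact Fin.ext h.symm
        · rw [if_neg h] at hj
          have := ZMod.val_lt (2 * (j.val : ZMod m) - (a : ZMod m))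
          omega
    · -- a, b < m : the unique i satisfies 2i = a + b mod m
      have hbm' : b < m := by omega
      clear hb
      obtain ⟨u, hu⟩ := sched_two_unit hm
      set e : ZMod m := (u⁻¹ : (ZMod m)ˣ) * ((a : ZMod m) + (b : ZMod m)) with he
      have h2e : 2 * e = (a : ZMod m) + (b : ZMod m) := by
        rw [he, ← mul_assoc, ← hu, Units.mul_inv, one_mul]
      have key : ∀ j : Fin m, schedF m j.val a = b ↔ (j.val : ZMod m) = e := by
        intro j
        constructor
        · intro hj
          simp only [schedF, if_neg ham] at hj
          by_cases h : a = j.val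
          · rw [if_pos h] at hj; omega
          · rw [if_neg h] at hj
            have : ((b : ℕ) : ZMod m) = 2 * (j.val : ZMod m) - (a : ZMod m) := by
              rw [← hj, ZMod.natCast_val, ZMod.cast_id]
            have h2j : 2 * (j.val : ZMod m) = 2 * e := by
              rw [h2e]; linear_combination -this
            exact (sched_two_unit hm).mul_left_cancel h2j
        · intro hj
          have haj : a ≠ j.val := by
            intro h
            have : 2 * ((a : ℕ) : ZMod m) = 2 * ((b : ℕ) : ZMod m) := by
              have := h2e
              rw [← hj, ← h] at this
              linear_combination 2 * this
            have := (sched_two_unit hm).mul_left_cancel this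
            exact hab (sched_cast_inj ham' hbm' this)
          simp only [schedF, if_neg ham, if_neg haj]
          have : 2 * (j.val : ZMod m) - (a : ZMod m) = (b : ZMod m) := by
            rw [hj, h2e]; ring
          rw [this, ZMod.val_cast_of_lt hbm']
      refine ⟨⟨e.val, ZMod.val_lt e⟩, (key _).mpr ?_, ?_⟩
      · simp [ZMod.natCast_val, ZMod.cast_id]
      · intro j hj
        have hj := (key j).mp hj
        apply Fin.ext
        have : ((j.val : ℕ) : ZMod m) = ((e.val : ℕ) : ZMod m) := by
          rw [hj]; simp [ZMod.natCast_val, ZMod.cast_id]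
        exact sched_cast_inj j.isLt (ZMod.val_lt e) this

end

/-- For every even `n ≥ 2` there is a tournament schedule on an `n`-element set: the
2-element subsets can be partitioned into `n - 1` perfect matchings. -/
theorem tournament_schedule_exists (n : ℕ) (hn : 2 ≤ n) (heven : n % 2 = 0) :
    ∃ R : Fin (n - 1) → Finset (Finset ℕ),
      IsTournamentSchedule (Finset.range n) n R := by
  set m := n - 1 with hmdef
  have hnm : n = m + 1 := by omega
  have hm : m % 2 = 1 := by omega
  set f : Fin (n - 1) → ℕ → ℕ := fun i x => schedF m i.val x with hf
  have hilt : ∀ i : Fin (n - 1), i.val < m := fun i => i.isLt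
  have flt : ∀ (i : Fin (n-1)) {x}, x < n → f i x < n := by
    intro i x hx
    rw [hnm] at hx ⊢
    exact schedF_lt hm (hilt i) hx
  have fne : ∀ (i : Fin (n-1)) {x}, x < n → f i x ≠ x := by
    intro i x hx
    rw [hnm] at hx
    exact schedF_ne hm (hilt i) hx
  have finv : ∀ (i : Fin (n-1)) {x}, x < n → f i (f i x) = x := by
    intro i x hx
    rw [hnm] at hx
    exact schedF_invol hm (hilt i) hx
  refine ⟨fun i => (Finset.range n).image (fun x => ({x, f i x} : Finset ℕ)), ?_, ?_, ?_, ?_⟩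
  · -- pairs are 2-subsets of X
    intro i p hp
    simp only [Finset.mem_image, Finset.mem_range] at hp
    obtain ⟨x, hx, rfl⟩ := hp
    constructor
    · intro z hz
      simp only [Finset.mem_insert, Finset.mem_singleton] at hz
      rcases hz with rfl | rfl
      · simpa using hx
      · simpa using flt i hx
    · exact Finset.card_pair (Ne.symm (fne i hx))
  · -- disjointness within a round
    intro i p hp q hq hpq
    simp only [Finset.mem_image, Finset.mem_range] at hp hq
    obtain ⟨x, hx, rfl⟩ := hp
    obtain ⟨y, hy, rfl⟩ := hq
    rw [Finset.disjoint_left]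
    intro z hzp hzq
    apply hpq
    simp only [Finset.mem_insert, Finset.mem_singleton] at hzp hzq
    have pairz : ∀ w, w < n → (z = w ∨ z = f i w) → ({w, f i w} : Finset ℕ) = {z, f i z} := by
      intro w hw hcase
      rcases hcase with rfl | rfl
      · rfl
      · rw [finv i hw, Finset.pair_comm]
    rw [pairz x hx hzp, pairz y hy hzq]
  · -- each round covers X
    intro i x hx
    rw [Finset.mem_range] at hx
    exact ⟨{x, f i x}, Finset.mem_image.mpr ⟨x, Finset.mem_range.mpr hx, rfl⟩, by simp⟩
  · -- every 2-subset appears in exactly one round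
    intro p hpX hp2
    obtain ⟨a, b, hab, rfl⟩ := Finset.card_eq_two.mp hp2
    have ha : a < n := Finset.mem_range.mp (hpX (by simp))
    have hb : b < n := Finset.mem_range.mp (hpX (by simp))
    have ha' : a < m + 1 := by omega
    have hb' : b < m + 1 := by omega
    obtain ⟨i, hi, hiu⟩ := schedF_existsUnique hm ha' hb' hab
    have hiub : ∀ j : Fin (n - 1), f j a = b → j = i := by
      intro j hj
      exact hiu j hj
    refine ⟨i, ?_, ?_⟩
    · simp only [Finset.mem_image, Finset.mem_range]
      exact ⟨a, ha, by rw [show f i a = b from hi]⟩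
    · intro j hj
      simp only [Finset.mem_image, Finset.mem_range] at hj
      obtain ⟨x, hx, hxe⟩ := hj
      have hfab : f j a = b := by
        have hmem : a ∈ ({x, f j x} : Finset ℕ) := by rw [hxe]; simp
        have hmem' : b ∈ ({x, f j x} : Finset ℕ) := by rw [hxe]; simp
        simp only [Finset.mem_insert, Finset.mem_singleton] at hmem hmem'
        rcases hmem with rfl | rfl
        · rcases hmem' with rfl | rfl
          · exact absurd rfl hab
          · rfl
        · rcases hmem' with rfl | hb2
          · exact finv j hx
          · exact absurd hb2.symm hab
      exact hiub j hfab
end
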